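/- If φ: R^n → R is a C² strictly convex function and T = ∇φ pushes the density ρ₀ forward to the density ρ₁ (both positive and continuous), then φ satisfies the Monge–Ampère equation det(D²φ(x)) = ρ₀(x)/ρ₁(∇φ(x)) for all x. -/

import Mathlib

open MeasureTheory


lemma det_pos_of_posdef {n : ℕ} (A : EuclideanSpace ℝ (Fin n) →L[ℝ] EuclideanSpace ℝ (Fin n))
    (hA : ∀ v : EuclideanSpace ℝ (Fin n), v ≠ 0 → (0:ℝ) < inner ℝ v (A v)) : 0 < A.det := by
  set B : ℝ → (EuclideanSpace ℝ (Fin n) →L[ℝ] EuclideanSpace ℝ (Fin n)) :=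
    fun t => (1 - t) • ContinuousLinearMap.id ℝ _ + t • A with hB
  have hcont : Continuous fun t => (B t).det :=
    ContinuousLinearMap.continuous_det.comp
      (((continuous_const.sub continuous_id).smul continuous_const).add
        (continuous_id.smul continuous_const))
  have hne : ∀ t ∈ Set.Icc (0:ℝ) 1, (B t).det ≠ 0 := by
    intro t ht h0
    have hk := LinearMap.bot_lt_ker_of_det_eq_zero (f := (B t : EuclideanSpace ℝ (Fin n) →ₗ[ℝ] EuclideanSpace ℝ (Fin n))) h0
    obtain ⟨v, hv, hv0⟩ := SetLike.exists_of_lt hk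
    have hv0' : v ≠ 0 := by simpa using hv0
    have hBv : (B t) v = 0 := hv
    have hinner : (0:ℝ) < inner ℝ v (B t v) := by
      rw [hB]
      simp only [ContinuousLinearMap.add_apply, ContinuousLinearMap.smul_apply,
        ContinuousLinearMap.id_apply, inner_add_right, inner_smul_right]
      rcases eq_or_lt_of_le ht.1 with h | h
      · have hp : (0:ℝ) < inner ℝ v v := by
          rw [real_inner_self_eq_norm_mul_norm]
          exact mul_pos (norm_pos_iff.mpr hv0') (norm_pos_iff.mpr hv0')
        rw [← h]; simpa using hp
      · have h1 : (0:ℝ) ≤ (1 - t) * inner ℝ v v := by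
          have := real_inner_self_nonneg (x := v)
          nlinarith [ht.2]
        have h2 : (0:ℝ) < t * inner ℝ v (A v) := mul_pos h (hA v hv0')
        linarith
    rw [hBv, inner_zero_right] at hinner
    exact lt_irrefl _ hinner
  have hB0 : (B 0).det = 1 := by
    have : B 0 = ContinuousLinearMap.id ℝ _ := by ext v; simp [hB]
    rw [this]; simp [ContinuousLinearMap.det]
  have hB1 : (B 1).det = A.det := by
    have : B 1 = A := by ext v; simp [hB]
    rw [this]
  by_contra hle
  push_neg at hle
  have : (0:ℝ) ∈ Set.Icc ((B 1).det) ((B 0).det) := by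
    constructor <;> simp [hB0, hB1] <;> linarith
  obtain ⟨t, ht, h0⟩ := intermediate_value_Icc' (le_of_lt one_pos) hcont.continuousOn this
  exact hne t ht h0

lemma not_pos_of_integral_closedBall_zero {n : ℕ} (F : EuclideanSpace ℝ (Fin n) → ℝ)
    (hF : Continuous F) (x₀ : EuclideanSpace ℝ (Fin n))
    (h : ∀ r > (0:ℝ), ∫ x in Metric.closedBall x₀ r, F x = 0) (hpos : 0 < F x₀) : False := by
  obtain ⟨δ, hδ, hδ'⟩ := Metric.continuousAt_iff.1 (hF.continuousAt (x := x₀)) (F x₀ / 2)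
    (by linarith)
  set r := δ / 2 with hr
  have hr0 : 0 < r := by positivity
  have hlow : ∀ x ∈ Metric.closedBall x₀ r, F x₀ / 2 ≤ F x := by
    intro x hx
    have hd : dist x x₀ < δ := lt_of_le_of_lt (Metric.mem_closedBall.1 hx) (by linarith)
    have := hδ' hd
    rw [Real.dist_eq] at this
    have := abs_lt.1 this
    linarith [this.1]
  have hint : IntegrableOn F (Metric.closedBall x₀ r) volume :=
    hF.continuousOn.integrableOn_compact (isCompact_closedBall _ _)
  have hmono := MeasureTheory.setIntegral_mono_on (integrableOn_const
      (measure_closedBall_lt_top.ne)) hint measurableSet_closedBall hlow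
  rw [MeasureTheory.setIntegral_const] at hmono
  have hvol : 0 < (volume (Metric.closedBall x₀ r)).toReal :=
    ENNReal.toReal_pos (Metric.measure_closedBall_pos volume x₀ hr0).ne' measure_closedBall_lt_top.ne
  rw [h r hr0, smul_eq_mul, measureReal_def] at hmono
  nlinarith

lemma eq_zero_of_integral_closedBall_zero {n : ℕ} (F : EuclideanSpace ℝ (Fin n) → ℝ)
    (hF : Continuous F) (x₀ : EuclideanSpace ℝ (Fin n))
    (h : ∀ r > (0:ℝ), ∫ x in Metric.closedBall x₀ r, F x = 0) : F x₀ = 0 := by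
  rcases lt_trichotomy (F x₀) 0 with hlt | heq | hgt
  · exact absurd (not_pos_of_integral_closedBall_zero (fun x => -F x) hF.neg x₀
      (fun r hr => by rw [MeasureTheory.integral_neg, h r hr, neg_zero])
      (by simpa using neg_pos.mpr hlt)) not_false
  · exact heq
  · exact absurd (not_pos_of_integral_closedBall_zero F hF x₀ h hgt) not_false

/-- Monge–Ampère equation: if `φ : ℝⁿ → ℝ` is C² and strictly convex (Hessian positive
definite) and `T = ∇φ` pushes the density `ρ₀` forward to the density `ρ₁` (both positive
and continuous), then `det D²φ(x) = ρ₀ x / ρ₁ (∇φ x)` for all `x`. -/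
theorem monge_ampere_of_pushforward (n : ℕ)
    (φ : EuclideanSpace ℝ (Fin n) → ℝ) (hφ : ContDiff ℝ 2 φ)
    (hconv : ∀ x, ∀ v : EuclideanSpace ℝ (Fin n), v ≠ 0 →
      (0:ℝ) < inner ℝ v ((fderiv ℝ (gradient φ) x) v : EuclideanSpace ℝ (Fin n)))
    (ρ₀ ρ₁ : EuclideanSpace ℝ (Fin n) → ℝ)
    (hρ₀pos : ∀ x, 0 < ρ₀ x) (hρ₁pos : ∀ x, 0 < ρ₁ x)
    (hρ₀cont : Continuous ρ₀) (hρ₁cont : Continuous ρ₁)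
    (hpush : Measure.map (gradient φ) (volume.withDensity fun x => ENNReal.ofReal (ρ₀ x))
      = volume.withDensity fun y => ENNReal.ofReal (ρ₁ y)) :
    ∀ x, (fderiv ℝ (gradient φ) x).det = ρ₀ x / ρ₁ (gradient φ x) := by
  -- Regularity of the gradient map
  have hT1 : ContDiff ℝ 1 (gradient φ) := by
    have h2 : ContDiff ℝ 1 (fderiv ℝ φ) := hφ.fderiv_right (by norm_num)
    exact ((InnerProductSpace.toDual ℝ (EuclideanSpace ℝ (Fin n))).symm.contDiff).comp h2
  have hTc : Continuous (gradient φ) := hT1.continuous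
  have hTd : Differentiable ℝ (gradient φ) := hT1.differentiable one_ne_zero
  have hfd_cont : Continuous (fun x => fderiv ℝ (gradient φ) x) := hT1.continuous_fderiv one_ne_zero
  have hdet_cont : Continuous (fun x => (fderiv ℝ (gradient φ) x).det) :=
    ContinuousLinearMap.continuous_det.comp hfd_cont
  -- positivity of the Jacobian determinant
  have hdetpos : ∀ x, 0 < (fderiv ℝ (gradient φ) x).det := fun x =>
    det_pos_of_posdef _ (fun v hv => hconv x v hv)
  -- injectivity of the gradient map
  have hinj : Function.Injective (gradient φ) := by
    intro a b hab
    by_contra hne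
    set w : EuclideanSpace ℝ (Fin n) := b - a with hw
    have hw0 : w ≠ 0 := sub_ne_zero.mpr (Ne.symm hne)
    set c : ℝ → EuclideanSpace ℝ (Fin n) := fun t => a + t • w with hc
    set g : ℝ → ℝ := fun t => inner ℝ (gradient φ (c t)) w with hg
    have hgderiv : ∀ t, HasDerivAt g
        (inner ℝ ((fderiv ℝ (gradient φ) (c t)) w) w : ℝ) t := by
      intro t
      have hcder : HasDerivAt c w t := by
        have := ((hasDerivAt_id t).smul_const w).const_add a
        simp only [id, one_smul] at this
        exact this
      have hTder : HasDerivAt (fun t => gradient φ (c t))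
          ((fderiv ℝ (gradient φ) (c t)) w) t :=
        (hTd (c t)).hasFDerivAt.comp_hasDerivAt t hcder
      have := hTder.inner ℝ (hasDerivAt_const t w)
      simpa only [inner_zero_right, zero_add, add_zero] using this
    have hmono : StrictMono g := by
      apply strictMono_of_deriv_pos
      intro t
      rw [(hgderiv t).deriv]
      have := hconv (c t) w hw0
      rwa [real_inner_comm] at this
    have h01 : g 0 < g 1 := hmono zero_lt_one
    have hc0 : c 0 = a := by simp [hc]
    have hc1 : c 1 = b := by simp [hc, hw]
    rw [hg] at h01
    simp only [] at h01
    rw [hc0, hc1, hab] at h01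
    exact lt_irrefl _ h01
  -- the key integral identity over closed balls
  have key : ∀ (x₀ : EuclideanSpace ℝ (Fin n)) (r : ℝ), 0 < r →
      ∫ x in Metric.closedBall x₀ r, ρ₀ x
        = ∫ x in Metric.closedBall x₀ r,
            (fderiv ℝ (gradient φ) x).det * ρ₁ (gradient φ x) := by
    intro x₀ r hr
    set B := Metric.closedBall x₀ r with hBdef
    have hBm : MeasurableSet B := measurableSet_closedBall
    have himg : MeasurableSet (gradient φ '' B) :=
      (((isCompact_closedBall x₀ r).image hTc).isClosed).measurableSet
    have hchg := lintegral_image_eq_lintegral_abs_det_fderiv_mul volume hBm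
      (fun x _ => (hTd x).hasFDerivAt.hasFDerivWithinAt) (hinj.injOn)
      (fun y => ENNReal.ofReal (ρ₁ y))
    have h1 : ∫⁻ x in gradient φ '' B, ENNReal.ofReal (ρ₁ x)
        = (volume.withDensity fun y => ENNReal.ofReal (ρ₁ y)) (gradient φ '' B) :=
      (withDensity_apply _ himg).symm
    have h2 : (volume.withDensity fun y => ENNReal.ofReal (ρ₁ y)) (gradient φ '' B)
        = (volume.withDensity fun x => ENNReal.ofReal (ρ₀ x)) B := by
      rw [← hpush, Measure.map_apply hTc.measurable himg, Set.preimage_image_eq _ hinj]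
    have h3 : (volume.withDensity fun x => ENNReal.ofReal (ρ₀ x)) B
        = ∫⁻ x in B, ENNReal.ofReal (ρ₀ x) := withDensity_apply _ hBm
    have hlin : ∫⁻ x in B, ENNReal.ofReal (ρ₀ x)
        = ∫⁻ x in B, ENNReal.ofReal ((fderiv ℝ (gradient φ) x).det * ρ₁ (gradient φ x)) := by
      rw [← h3, ← h2, ← h1, hchg]
      apply lintegral_congr
      intro x
      rw [ENNReal.ofReal_mul (hdetpos x).le, abs_of_pos (hdetpos x)]
    -- convert to Bochner integrals
    have hi0 : IntegrableOn ρ₀ B volume :=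
      hρ₀cont.continuousOn.integrableOn_compact (isCompact_closedBall _ _)
    have hcont2 : Continuous (fun x => (fderiv ℝ (gradient φ) x).det * ρ₁ (gradient φ x)) :=
      hdet_cont.mul (hρ₁cont.comp hTc)
    have hi1 : IntegrableOn (fun x => (fderiv ℝ (gradient φ) x).det * ρ₁ (gradient φ x)) B
        volume := hcont2.continuousOn.integrableOn_compact (isCompact_closedBall _ _)
    have e0 : ENNReal.ofReal (∫ x in B, ρ₀ x) = ∫⁻ x in B, ENNReal.ofReal (ρ₀ x) :=
      MeasureTheory.ofReal_integral_eq_lintegral_ofReal hi0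
        (Filter.Eventually.of_forall (fun x => (hρ₀pos x).le))
    have e1 : ENNReal.ofReal (∫ x in B, (fderiv ℝ (gradient φ) x).det * ρ₁ (gradient φ x))
        = ∫⁻ x in B, ENNReal.ofReal ((fderiv ℝ (gradient φ) x).det * ρ₁ (gradient φ x)) :=
      MeasureTheory.ofReal_integral_eq_lintegral_ofReal hi1
        (Filter.Eventually.of_forall
          (fun x => (mul_pos (hdetpos x) (hρ₁pos (gradient φ x))).le))
    have hofr : ENNReal.ofReal (∫ x in B, ρ₀ x)
        = ENNReal.ofReal (∫ x in B, (fderiv ℝ (gradient φ) x).det * ρ₁ (gradient φ x)) := by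
      rw [e0, e1, hlin]
    have hnn0 : 0 ≤ ∫ x in B, ρ₀ x :=
      MeasureTheory.setIntegral_nonneg hBm (fun x _ => (hρ₀pos x).le)
    have hnn1 : 0 ≤ ∫ x in B, (fderiv ℝ (gradient φ) x).det * ρ₁ (gradient φ x) :=
      MeasureTheory.setIntegral_nonneg hBm
        (fun x _ => (mul_pos (hdetpos x) (hρ₁pos (gradient φ x))).le)
    exact (ENNReal.ofReal_eq_ofReal_iff hnn0 hnn1).1 hofr
  -- local identification of the densities
  intro x
  have hFcont : Continuous
      (fun x => ρ₀ x - (fderiv ℝ (gradient φ) x).det * ρ₁ (gradient φ x)) :=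
    hρ₀cont.sub (hdet_cont.mul (hρ₁cont.comp hTc))
  have hzero := eq_zero_of_integral_closedBall_zero
    (fun x => ρ₀ x - (fderiv ℝ (gradient φ) x).det * ρ₁ (gradient φ x)) hFcont x
    (by
      intro r hr
      have hi0 : IntegrableOn ρ₀ (Metric.closedBall x r) volume :=
        hρ₀cont.continuousOn.integrableOn_compact (isCompact_closedBall _ _)
      have hi1 : IntegrableOn
          (fun x => (fderiv ℝ (gradient φ) x).det * ρ₁ (gradient φ x))
          (Metric.closedBall x r) volume :=
        (hdet_cont.mul (hρ₁cont.comp hTc)).continuousOn.integrableOn_compact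
          (isCompact_closedBall _ _)
      rw [MeasureTheory.integral_sub hi0 hi1, key x r hr, sub_self])
  have hne : ρ₁ (gradient φ x) ≠ 0 := (hρ₁pos _).ne'
  rw [eq_div_iff hne]
  linarith
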